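/- Apart from zero rows, the Smith normal form of the (2|V|) × |E| matrix formed by stacking A_G on top of −A_G, where A_G is the incidence matrix of a finite graph G, is the diagonal matrix with |V| − c(G) entries equal to 1 and c₁(G) entries equal to 2, where c(G) is the number of connected components of G and c₁(G) the number of connected components containing an odd cycle. -/

import Mathlib

noncomputable section

open scoped Classical

variable {V : Type*} [Fintype V] [DecidableEq V]

/-- The number of connected components of `G`. -/
def numComp (G : SimpleGraph V) : ℕ := Nat.card G.ConnectedComponent

/-- The number of connected components of `G` containing an odd cycle
(a closed walk of odd length). -/
def numOddComp (G : SimpleGraph V) : ℕ :=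
  Nat.card {C : G.ConnectedComponent //
    ∃ v, G.connectedComponentMk v = C ∧ ∃ w : G.Walk v v, Odd w.length}

/-- The incidence-type matrix `(A_G; -A_G)` with rows indexed by `V ⊕ V`:
the column of the edge `{i,j}` is `e_i + e_j` on top and `-(e_i + e_j)` below. -/
def stackedIncidence (G : SimpleGraph V) {M : ℕ} (ε : Fin M ≃ G.edgeSet) :
    Matrix (V ⊕ V) (Fin M) ℤ :=
  fun p e => match p with
    | Sum.inl v => if v ∈ (ε e : Sym2 V) then 1 else 0
    | Sum.inr v => if v ∈ (ε e : Sym2 V) then -1 else 0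

set_option linter.unusedSectionVars false
open Submodule

namespace SNFaux

variable (G : SimpleGraph V)

/-- root of the component of `v` -/
def rt (v : V) : V := (G.connectedComponentMk v).out

lemma mk_rt (v : V) : G.connectedComponentMk (rt G v) = G.connectedComponentMk v :=
  Quot.out_eq _

lemma rt_eq_of_mk_eq {u v : V} (h : G.connectedComponentMk u = G.connectedComponentMk v) :
    rt G u = rt G v := by unfold rt; rw [h]

lemma rt_eq_of_adj {u v : V} (h : G.Adj u v) : rt G u = rt G v :=
  rt_eq_of_mk_eq G (SimpleGraph.ConnectedComponent.connectedComponentMk_eq_of_adj h)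

lemma reachable_rt (v : V) : G.Reachable (rt G v) v :=
  SimpleGraph.ConnectedComponent.exact (mk_rt G v)

lemma rt_rt (v : V) : rt G (rt G v) = rt G v := rt_eq_of_mk_eq G (mk_rt G v)

/-- depth of a vertex: distance to the root of its component -/
def dep (v : V) : ℕ := G.dist (rt G v) v

lemma dep_rt (v : V) : dep G (rt G v) = 0 := by
  unfold dep; rw [rt_rt]; exact SimpleGraph.dist_self

lemma dep_eq_zero_iff (v : V) : dep G v = 0 ↔ v = rt G v := by
  unfold dep
  rw [(reachable_rt G v).dist_eq_zero_iff]
  exact eq_comm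

lemma exists_parent {v : V} (h : v ≠ rt G v) :
    ∃ u, G.Adj u v ∧ dep G u + 1 = dep G v := by
  obtain ⟨p, hp⟩ := (reachable_rt G v).exists_walk_length_eq_dist
  have hpos : 0 < dep G v := by
    have := (dep_eq_zero_iff G v).not.2 h
    omega
  have hlen : p.reverse.length = dep G v := by
    rw [SimpleGraph.Walk.length_reverse]; exact hp
  obtain ⟨u, hadj, q, hrev⟩ := SimpleGraph.Walk.exists_eq_cons_of_ne h p.reverse
  ·
    rw [hrev] at hlen
    simp only [SimpleGraph.Walk.length_cons] at hlen
    refine ⟨u, hadj.symm, ?_⟩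
    have hrtu : rt G u = rt G v := (rt_eq_of_adj G hadj.symm)
    -- dep u ≤ q.length via walk q.reverse
    have h1 : dep G u ≤ q.length := by
      have := SimpleGraph.dist_le q.reverse
      unfold dep
      rw [hrtu]
      simpa [SimpleGraph.Walk.length_reverse] using this
    -- dep v ≤ dep u + 1
    have h2 : dep G v ≤ dep G u + 1 := by
      obtain ⟨w, hw⟩ := (reachable_rt G u).exists_walk_length_eq_dist
      have := SimpleGraph.dist_le ((w.concat hadj.symm).copy (by rw [hrtu]) rfl)
      unfold dep at *
      simpa [SimpleGraph.Walk.length_concat, hw] using this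
    omega

/-- parent of a vertex (junk value at roots) -/
def par (v : V) : V :=
  if h : v = rt G v then v else Classical.choose (exists_parent G h)

lemma par_adj {v : V} (h : v ≠ rt G v) : G.Adj (par G v) v := by
  unfold par; rw [dif_neg h]; exact (Classical.choose_spec (exists_parent G h)).1

lemma dep_par {v : V} (h : v ≠ rt G v) : dep G (par G v) + 1 = dep G v := by
  unfold par; rw [dif_neg h]; exact (Classical.choose_spec (exists_parent G h)).2

lemma rt_par {v : V} (h : v ≠ rt G v) : rt G (par G v) = rt G v :=
  rt_eq_of_adj G (par_adj G h)

/-- sign of a vertex -/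
def sgn (v : V) : ℤ := (-1) ^ (dep G v)

lemma sgn_mul_self (v : V) : sgn G v * sgn G v = 1 := by
  unfold sgn; rw [← pow_add]; exact (neg_one_pow_eq_one_iff_even (by norm_num)).2 ⟨_, rfl⟩

lemma sgn_par {v : V} (h : v ≠ rt G v) : sgn G (par G v) = - sgn G v := by
  unfold sgn
  rw [← dep_par G h, pow_succ]
  ring

lemma sgn_rt (v : V) : sgn G (rt G v) = 1 := by unfold sgn; rw [dep_rt]; norm_num

lemma sgn_eq_of_even {u w : V} (h : Even (dep G u + dep G w)) : sgn G u = sgn G w := by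
  unfold sgn
  rcases Nat.even_or_odd (dep G u) with he | ho
  · have : Even (dep G w) := by rw [Nat.even_add] at h; exact h.1 he
    rw [he.neg_one_pow, this.neg_one_pow]
  · have : Odd (dep G w) := by
      rw [Nat.even_add] at h
      rcases Nat.even_or_odd (dep G w) with h2 | h2
      · exact absurd (h.2 h2) (Nat.not_even_iff_odd.2 ho)
      · exact h2
    rw [ho.neg_one_pow, this.neg_one_pow]

lemma sgn_add_eq_zero_of_odd {u w : V} (h : Odd (dep G u + dep G w)) :
    sgn G u + sgn G w = 0 := by
  unfold sgn
  rcases Nat.even_or_odd (dep G u) with he | ho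
  · have : Odd (dep G w) := by
      rcases Nat.even_or_odd (dep G w) with h2 | h2
      · exact absurd (he.add h2) (Nat.not_even_iff_odd.2 h)
      · exact h2
    rw [he.neg_one_pow, this.neg_one_pow]; ring
  · have : Even (dep G w) := by
      rcases Nat.even_or_odd (dep G w) with h2 | h2
      · exact h2
      · exact absurd (Odd.add_odd ho h2) (by rw [Nat.not_even_iff_odd]; exact h)
    rw [ho.neg_one_pow, this.neg_one_pow]; ring

end SNFaux

namespace SNFaux
variable (G : SimpleGraph V)

/-- a component containing an odd closed walk -/
def OddC (C : G.ConnectedComponent) : Prop :=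
  ∃ v, G.connectedComponentMk v = C ∧ ∃ w : G.Walk v v, Odd w.length

lemma oddC_of_even_edge {u w : V} (hadj : G.Adj u w) (h : Even (dep G u + dep G w)) :
    OddC G (G.connectedComponentMk u) := by
  obtain ⟨p, hp⟩ := (reachable_rt G u).exists_walk_length_eq_dist
  obtain ⟨q, hq⟩ := (reachable_rt G w).exists_walk_length_eq_dist
  have hrtw : rt G w = rt G u := (rt_eq_of_adj G hadj).symm
  refine ⟨rt G u, mk_rt G u, ⟨p.append ((SimpleGraph.Walk.cons hadj
    (q.copy hrtw rfl).reverse)), ?_⟩⟩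
  rw [SimpleGraph.Walk.length_append, SimpleGraph.Walk.length_cons,
    SimpleGraph.Walk.length_reverse, SimpleGraph.Walk.length_copy, hp, hq]
  show Odd (dep G u + (dep G w + 1))
  rcases h with ⟨k, hk⟩
  exact ⟨dep G u + dep G w - k, by omega⟩

lemma walk_parity {C : G.ConnectedComponent}
    (H : ∀ u w, G.Adj u w → G.connectedComponentMk u = C → Odd (dep G u + dep G w))
    {x y : V} (p : G.Walk x y) (hx : G.connectedComponentMk x = C) :
    Even (p.length + dep G x + dep G y) := by
  induction p with
  | nil => simp [Nat.even_add]
  | cons hadj q ih =>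
    rename_i a b c
    have hb : G.connectedComponentMk b = C := by
      rw [← SimpleGraph.ConnectedComponent.connectedComponentMk_eq_of_adj hadj]; exact hx
    have h1 := ih hb
    have h2 := H a b hadj hx
    rw [SimpleGraph.Walk.length_cons]
    rw [Nat.even_iff] at h1 ⊢
    rw [Nat.odd_iff] at h2
    omega

lemma exists_even_edge {C : G.ConnectedComponent} (h : OddC G C) :
    ∃ u w, G.Adj u w ∧ G.connectedComponentMk u = C ∧ Even (dep G u + dep G w) := by
  by_contra hcon
  push_neg at hcon
  obtain ⟨v, hv, p, hp⟩ := h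
  have H : ∀ u w, G.Adj u w → G.connectedComponentMk u = C → Odd (dep G u + dep G w) := by
    intro u w ha hu
    rw [Nat.odd_iff, ← Nat.not_even_iff]
    exact hcon u w ha hu
  have := walk_parity G H p hv
  rw [Nat.even_iff] at this
  rw [Nat.odd_iff] at hp
  omega

end SNFaux

namespace SNFaux
variable (G : SimpleGraph V) {M : ℕ} (ε : Fin M ≃ G.edgeSet)

/-- doubled vector `(x, -x)` -/
def vec2 (x : V → ℤ) : (V ⊕ V) → ℤ := Sum.elim x (-x)

@[simp] lemma vec2_add (x y : V → ℤ) : vec2 (x + y) = vec2 x + vec2 y := by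
  funext i; cases i <;> simp [vec2] <;> ring

@[simp] lemma vec2_sub (x y : V → ℤ) : vec2 (x - y) = vec2 x - vec2 y := by
  funext i; cases i <;> simp [vec2] <;> ring

@[simp] lemma vec2_smul (c : ℤ) (x : V → ℤ) : vec2 (c • x) = c • vec2 x := by
  funext i; cases i <;> simp [vec2, mul_comm]

@[simp] lemma vec2_zero : vec2 (0 : V → ℤ) = 0 := by
  funext i; cases i <;> simp [vec2]

/-- the column of the stacked incidence matrix at an edge -/
lemma colB {e : Fin M} {u w : V} (h : (ε e : Sym2 V) = s(u, w)) :
    (stackedIncidence G ε).mulVec (Pi.single e 1) =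
      vec2 (Pi.single u 1 + Pi.single w 1) := by
  have hne : u ≠ w := by
    have := (ε e).2
    rw [h, SimpleGraph.mem_edgeSet] at this
    exact this.ne
  funext i
  rw [Matrix.mulVec_single]
  cases i with
  | inl x =>
    show (if x ∈ (ε e : Sym2 V) then (1:ℤ) else 0) * 1 = _
    rw [h]
    simp only [vec2, Sum.elim_inl, Pi.add_apply, Sym2.mem_iff, mul_one, Pi.single_apply]
    by_cases hxu : x = u <;> by_cases hxw : x = w <;>
      simp [hxu, hxw, hne, Ne.symm hne]
  | inr x =>
    show (if x ∈ (ε e : Sym2 V) then (-1:ℤ) else 0) * 1 = _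
    rw [h]
    simp only [vec2, Sum.elim_inr, Pi.neg_apply, Pi.add_apply, Sym2.mem_iff, mul_one,
      Pi.single_apply]
    by_cases hxu : x = u <;> by_cases hxw : x = w <;>
      simp [hxu, hxw, hne, Ne.symm hne]

/-- index of the tree edge of a non-root vertex -/
def eidx (v : V) (h : v ≠ rt G v) : Fin M :=
  ε.symm ⟨s(v, par G v), (par_adj G h).symm⟩

/-- tree column -/
def treeQ (v : {v : V // v ≠ rt G v}) : Fin M → ℤ := Pi.single (eidx G ε v.1 v.2) 1

lemma colB_tree (v : {v : V // v ≠ rt G v}) :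
    (stackedIncidence G ε).mulVec (treeQ G ε v) =
      vec2 (Pi.single v.1 1 + Pi.single (par G v.1) 1) := by
  apply colB
  show ((ε (ε.symm _) : G.edgeSet) : Sym2 V) = _
  rw [Equiv.apply_symm_apply]

/-- The span of the tree columns. -/
def QT : Submodule ℤ (Fin M → ℤ) := span ℤ (Set.range (treeQ G ε))

lemma exists_y (v : V) : ∃ y : Fin M → ℤ, y ∈ QT G ε ∧
    (stackedIncidence G ε).mulVec y =
      vec2 (Pi.single v 1) - sgn G v • vec2 (Pi.single (rt G v) 1) := by
  suffices h : ∀ (n : ℕ) (v : V), dep G v = n → ∃ y : Fin M → ℤ, y ∈ QT G ε ∧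
      (stackedIncidence G ε).mulVec y =
        vec2 (Pi.single v 1) - sgn G v • vec2 (Pi.single (rt G v) 1) from
    h (dep G v) v rfl
  intro n
  induction n using Nat.strong_induction_on with
  | _ n ih =>
    intro v hv
    by_cases hroot : v = rt G v
    · refine ⟨0, zero_mem _, ?_⟩
      rw [Matrix.mulVec_zero]
      rw [← hroot, sgn_eq_of_even G (u := v) (w := rt G v) (by rw [← hroot]; exact ⟨dep G v, by omega⟩)]
      rw [sgn_rt]
      rw [one_smul, sub_self]
    · obtain ⟨y', hy'mem, hy'⟩ := ih (dep G (par G v)) (by have := dep_par G hroot; omega)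
        (par G v) rfl
      refine ⟨treeQ G ε ⟨v, hroot⟩ - y', sub_mem (subset_span ⟨⟨v, hroot⟩, rfl⟩) hy'mem, ?_⟩
      rw [Matrix.mulVec_sub, colB_tree, hy']
      rw [rt_par G hroot, sgn_par G hroot]
      rw [vec2_add]
      module

/-- chosen tree combination connecting `v` to its root -/
def yv (v : V) : Fin M → ℤ := Classical.choose (exists_y G ε v)

lemma yv_mem (v : V) : yv G ε v ∈ QT G ε := (Classical.choose_spec (exists_y G ε v)).1

lemma yv_spec (v : V) : (stackedIncidence G ε).mulVec (yv G ε v) =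
    vec2 (Pi.single v 1) - sgn G v • vec2 (Pi.single (rt G v) 1) :=
  (Classical.choose_spec (exists_y G ε v)).2

end SNFaux

namespace SNFaux
variable (G : SimpleGraph V) {M : ℕ} (ε : Fin M ≃ G.edgeSet)

lemma exists_ends (e : Fin M) : ∃ u w : V, G.Adj u w ∧ (ε e : Sym2 V) = s(u, w) := by
  have h2 := (ε e).2
  obtain ⟨s, hs⟩ : ∃ s : Sym2 V, s = (ε e : Sym2 V) := ⟨_, rfl⟩
  rw [← hs] at h2 ⊢
  induction s with
  | _ u w => exact ⟨u, w, h2, rfl⟩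

/-- first endpoint of the edge with index `e` -/
def end1 (e : Fin M) : V := Classical.choose (exists_ends G ε e)

/-- second endpoint -/
def end2 (e : Fin M) : V :=
  Classical.choose (Classical.choose_spec (exists_ends G ε e))

lemma ends_adj (e : Fin M) : G.Adj (end1 G ε e) (end2 G ε e) :=
  (Classical.choose_spec (Classical.choose_spec (exists_ends G ε e))).1

lemma ends_spec (e : Fin M) : (ε e : Sym2 V) = s(end1 G ε e, end2 G ε e) :=
  (Classical.choose_spec (Classical.choose_spec (exists_ends G ε e))).2

lemma colB_ends (e : Fin M) :
    (stackedIncidence G ε).mulVec (Pi.single e 1) =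
      vec2 (Pi.single (end1 G ε e) 1 + Pi.single (end2 G ε e) 1) :=
  colB G ε (ends_spec G ε e)

/-- chosen "odd edge" endpoints for an odd component -/
def oc1 (C : {C : G.ConnectedComponent // OddC G C}) : V :=
  Classical.choose (exists_even_edge G C.2)

def oc2 (C : {C : G.ConnectedComponent // OddC G C}) : V :=
  Classical.choose (Classical.choose_spec (exists_even_edge G C.2))

lemma oc_adj (C : {C : G.ConnectedComponent // OddC G C}) : G.Adj (oc1 G C) (oc2 G C) :=
  (Classical.choose_spec (Classical.choose_spec (exists_even_edge G C.2))).1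

lemma oc_mk (C : {C : G.ConnectedComponent // OddC G C}) :
    G.connectedComponentMk (oc1 G C) = C.1 :=
  (Classical.choose_spec (Classical.choose_spec (exists_even_edge G C.2))).2.1

lemma oc_even (C : {C : G.ConnectedComponent // OddC G C}) :
    Even (dep G (oc1 G C) + dep G (oc2 G C)) :=
  (Classical.choose_spec (Classical.choose_spec (exists_even_edge G C.2))).2.2

/-- root vertex of a component -/
def rootC (C : G.ConnectedComponent) : V := C.out

lemma rt_oc1 (C : {C : G.ConnectedComponent // OddC G C}) :
    rt G (oc1 G C) = rootC G C.1 := by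
  unfold rt rootC; rw [oc_mk]

lemma rt_eq_rootC {v : V} {C : G.ConnectedComponent} (h : G.connectedComponentMk v = C) :
    rt G v = rootC G C := by unfold rt rootC; rw [h]

/-- index of the chosen odd edge -/
def specIdx (C : {C : G.ConnectedComponent // OddC G C}) : Fin M :=
  ε.symm ⟨s(oc1 G C, oc2 G C), oc_adj G C⟩

/-- the special column for an odd component -/
def specQ (C : {C : G.ConnectedComponent // OddC G C}) : Fin M → ℤ :=
  Pi.single (specIdx G ε C) 1 - yv G ε (oc1 G C) - yv G ε (oc2 G C)

lemma colB_specIdx (C : {C : G.ConnectedComponent // OddC G C}) :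
    (stackedIncidence G ε).mulVec (Pi.single (specIdx G ε C) 1) =
      vec2 (Pi.single (oc1 G C) 1 + Pi.single (oc2 G C) 1) := by
  apply colB
  show ((ε (ε.symm _) : G.edgeSet) : Sym2 V) = _
  rw [Equiv.apply_symm_apply]

lemma colB_spec (C : {C : G.ConnectedComponent // OddC G C}) :
    (stackedIncidence G ε).mulVec (specQ G ε C) =
      (2 * sgn G (oc1 G C)) • vec2 (Pi.single (rootC G C.1) 1) := by
  unfold specQ
  rw [Matrix.mulVec_sub, Matrix.mulVec_sub, yv_spec, yv_spec, colB_specIdx]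
  have h1 : rt G (oc1 G C) = rootC G C.1 := rt_oc1 G C
  have h2 : rt G (oc2 G C) = rootC G C.1 := by
    rw [← rt_eq_of_adj G (oc_adj G C)]; exact h1
  have h3 : sgn G (oc2 G C) = sgn G (oc1 G C) := (sgn_eq_of_even G (oc_even G C)).symm
  rw [h1, h2, h3, vec2_add]
  module

/-- span of tree and special columns -/
def QTS : Submodule ℤ (Fin M → ℤ) :=
  QT G ε ⊔ span ℤ (Set.range (specQ G ε))

lemma exists_sigma (e : Fin M) : ∃ z : Fin M → ℤ, z ∈ QTS G ε ∧
    (stackedIncidence G ε).mulVec z =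
      (stackedIncidence G ε).mulVec (Pi.single e 1) := by
  set u := end1 G ε e
  set w := end2 G ε e
  have hadj : G.Adj u w := ends_adj G ε e
  have hrt : rt G w = rt G u := (rt_eq_of_adj G hadj).symm
  have hQT : QT G ε ≤ QTS G ε := le_sup_left
  by_cases hpar : Even (dep G u + dep G w)
  · -- the component is odd: use the special column
    set C : {C : G.ConnectedComponent // OddC G C} :=
      ⟨G.connectedComponentMk u, oddC_of_even_edge G hadj hpar⟩
    have hroot : rt G u = rootC G C.1 := rt_eq_rootC G rfl
    refine ⟨yv G ε u + yv G ε w + (sgn G u * sgn G (oc1 G C)) • specQ G ε C,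
      add_mem (add_mem (hQT (yv_mem G ε u)) (hQT (yv_mem G ε w)))
        (smul_mem _ _ (Submodule.mem_sup_right (subset_span ⟨C, rfl⟩))), ?_⟩
    rw [Matrix.mulVec_add, Matrix.mulVec_add, Matrix.mulVec_smul, yv_spec, yv_spec,
      colB_spec, colB_ends]
    rw [hrt, hroot, vec2_add]
    have h3 : sgn G w = sgn G u := (sgn_eq_of_even G hpar).symm
    rw [h3]
    have hs : sgn G (oc1 G C) * sgn G (oc1 G C) = 1 := sgn_mul_self G _
    have : (sgn G u * sgn G (oc1 G C)) • (2 * sgn G (oc1 G C)) •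
        vec2 (Pi.single (rootC G C.1) 1) = (2 * sgn G u) • vec2 (Pi.single (rootC G C.1) 1) := by
      have hs2 : sgn G (oc1 G C) ^ 2 = 1 := by rw [sq]; exact hs
      rw [smul_smul]
      congr 1
      ring_nf
      rw [hs2]
      ring
    rw [this]
    module
  · -- parity odd: tree columns suffice
    have hodd : Odd (dep G u + dep G w) := Nat.not_even_iff_odd.1 hpar
    have hz : sgn G u + sgn G w = 0 := sgn_add_eq_zero_of_odd G hodd
    refine ⟨yv G ε u + yv G ε w, add_mem (hQT (yv_mem G ε u)) (hQT (yv_mem G ε w)), ?_⟩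
    rw [Matrix.mulVec_add, yv_spec, yv_spec, colB_ends]
    rw [hrt, vec2_add]
    have : sgn G w = - sgn G u := by linarith
    rw [this]
    module

/-- chosen element of `QTS` with the same image as the `e` unit vector -/
def sigmaQ (e : Fin M) : Fin M → ℤ := Classical.choose (exists_sigma G ε e)

lemma sigmaQ_mem (e : Fin M) : sigmaQ G ε e ∈ QTS G ε :=
  (Classical.choose_spec (exists_sigma G ε e)).1

lemma sigmaQ_spec (e : Fin M) : (stackedIncidence G ε).mulVec (sigmaQ G ε e) =
    (stackedIncidence G ε).mulVec (Pi.single e 1) :=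
  (Classical.choose_spec (exists_sigma G ε e)).2

end SNFaux

namespace SNFaux
variable (G : SimpleGraph V) {M : ℕ} (ε : Fin M ≃ G.edgeSet)

lemma dep_pos {v : V} (h : v ≠ rt G v) : 0 < dep G v := by
  have := (dep_eq_zero_iff G v).not.2 h
  omega

lemma eidx_inj : Function.Injective
    (fun v : {v : V // v ≠ rt G v} => eidx G ε v.1 v.2) := by
  rintro ⟨v, hv⟩ ⟨w, hw⟩ h
  simp only [eidx] at h
  have h2 := congrArg (fun i => ((ε i : G.edgeSet) : Sym2 V)) h
  simp only [Equiv.apply_symm_apply] at h2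
  rw [Sym2.eq_iff] at h2
  rcases h2 with ⟨h3, _⟩ | ⟨h3, h4⟩
  · exact Subtype.ext h3
  · exfalso
    have d1 := dep_par G hv
    have d2 := dep_par G hw
    have e1 : dep G v = dep G (par G w) := by rw [h3]
    have e2 : dep G (par G v) = dep G w := by rw [h4]
    have := dep_pos G hv
    have := dep_pos G hw
    omega

lemma specIdx_inj : Function.Injective (specIdx G ε) := by
  intro C C' h
  simp only [specIdx] at h
  have h2 := congrArg (fun i => ((ε i : G.edgeSet) : Sym2 V)) h
  simp only [Equiv.apply_symm_apply] at h2
  rw [Sym2.eq_iff] at h2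
  have key : G.connectedComponentMk (oc1 G C) = G.connectedComponentMk (oc1 G C') := by
    rcases h2 with ⟨h3, _⟩ | ⟨h3, h4⟩
    · rw [h3]
    · rw [h3, ← SimpleGraph.ConnectedComponent.connectedComponentMk_eq_of_adj (oc_adj G C')]
  apply Subtype.ext
  rw [← oc_mk G C, ← oc_mk G C', key]

lemma eidx_ne_specIdx (v : {v : V // v ≠ rt G v}) (C : {C : G.ConnectedComponent // OddC G C}) :
    eidx G ε v.1 v.2 ≠ specIdx G ε C := by
  intro h
  simp only [eidx, specIdx] at h
  have h2 := congrArg (fun i => ((ε i : G.edgeSet) : Sym2 V)) h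
  simp only [Equiv.apply_symm_apply] at h2
  rw [Sym2.eq_iff] at h2
  have hodd : Odd (dep G v.1 + dep G (par G v.1)) := by
    have := dep_par G v.2
    have := dep_pos G v.2
    refine ⟨dep G (par G v.1), by omega⟩
  have heven := oc_even G C
  have : dep G v.1 + dep G (par G v.1) = dep G (oc1 G C) + dep G (oc2 G C) := by
    rcases h2 with ⟨h3, h4⟩ | ⟨h3, h4⟩ <;> rw [← h3, ← h4] <;> ring
  rw [this] at hodd
  rw [Nat.even_iff] at heven
  rw [Nat.odd_iff] at hodd
  omega

/-- the set of pivot column indices -/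
def pivot : Finset (Fin M) :=
  (Finset.univ.image (fun v : {v : V // v ≠ rt G v} => eidx G ε v.1 v.2)) ∪
    (Finset.univ.image (specIdx G ε))

lemma card_pivot : (pivot G ε).card =
    Fintype.card {v : V // v ≠ rt G v} +
      Fintype.card {C : G.ConnectedComponent // OddC G C} := by
  unfold pivot
  rw [Finset.card_union_of_disjoint, Finset.card_image_of_injective _ (eidx_inj G ε),
    Finset.card_image_of_injective _ (specIdx_inj G ε), Finset.card_univ, Finset.card_univ]
  rw [Finset.disjoint_left]
  intro i hi hi'
  simp only [Finset.mem_image, Finset.mem_univ, true_and] at hi hi'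
  obtain ⟨v, hv⟩ := hi
  obtain ⟨C, hC⟩ := hi'
  exact eidx_ne_specIdx G ε v C (hv.trans hC.symm)

lemma card_roots : Fintype.card {v : V // v = rt G v} = Fintype.card G.ConnectedComponent := by
  refine Fintype.card_congr ⟨fun v => G.connectedComponentMk v.1,
    fun C => ⟨C.out, ?_⟩, fun v => Subtype.ext ?_, fun C => ?_⟩
  · show C.out = rt G C.out
    unfold rt
    congr 1
    exact (Quot.out_eq C).symm
  · show (G.connectedComponentMk v.1).out = v.1
    conv_rhs => rw [v.2]
    rfl
  · exact Quot.out_eq C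

lemma card_nonroots : Fintype.card {v : V // v ≠ rt G v} =
    Fintype.card V - Fintype.card G.ConnectedComponent := by
  rw [← card_roots G]
  have := Fintype.card_subtype_compl (fun v : V => v = rt G v)
  convert this using 2

lemma card_comp_le : Fintype.card G.ConnectedComponent ≤ Fintype.card V :=
  Fintype.card_le_of_surjective G.connectedComponentMk Quot.mk_surjective

end SNFaux

namespace SNFaux
variable (G : SimpleGraph V) {M : ℕ} (ε : Fin M ≃ G.edgeSet)
variable {a r2 N : ℕ}

/-- the new row basis family -/
def pfam (α : Fin a ≃ {v : V // v ≠ rt G v})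
    (β : Fin r2 ≃ {C : G.ConnectedComponent // OddC G C})
    (ψ : {j : Fin N // a + r2 ≤ (j : ℕ)} ≃ ({C : G.ConnectedComponent // ¬ OddC G C} ⊕ V)) :
    Fin N → ((V ⊕ V) → ℤ) := fun j =>
  if h1 : (j : ℕ) < a then
    vec2 (Pi.single ((α ⟨j, h1⟩ : V)) 1 + Pi.single (par G (α ⟨j, h1⟩)) 1)
  else if h2 : (j : ℕ) < a + r2 then
    sgn G (oc1 G (β ⟨(j : ℕ) - a, by omega⟩)) •
      vec2 (Pi.single (rootC G (β ⟨(j : ℕ) - a, by omega⟩).1) 1)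
  else
    Sum.elim
      (fun C : {C : G.ConnectedComponent // ¬ OddC G C} => vec2 (Pi.single (rootC G C.1) 1))
      (fun v : V => Sum.elim 0 (Pi.single v 1)) (ψ ⟨j, by omega⟩)

/-- the new column basis family -/
def qfam (α : Fin a ≃ {v : V // v ≠ rt G v})
    (β : Fin r2 ≃ {C : G.ConnectedComponent // OddC G C})
    (φ : {j : Fin M // a + r2 ≤ (j : ℕ)} ≃ {i : Fin M // i ∉ pivot G ε}) :
    Fin M → (Fin M → ℤ) := fun j =>
  if h1 : (j : ℕ) < a then treeQ G ε (α ⟨j, h1⟩)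
  else if h2 : (j : ℕ) < a + r2 then specQ G ε (β ⟨(j : ℕ) - a, by omega⟩)
  else Pi.single ((φ ⟨j, by omega⟩ : Fin M)) 1 - sigmaQ G ε (φ ⟨j, by omega⟩ : Fin M)

variable (α : Fin a ≃ {v : V // v ≠ rt G v})
variable (β : Fin r2 ≃ {C : G.ConnectedComponent // OddC G C})
variable (ψ : {j : Fin N // a + r2 ≤ (j : ℕ)} ≃ ({C : G.ConnectedComponent // ¬ OddC G C} ⊕ V))
variable (φ : {j : Fin M // a + r2 ≤ (j : ℕ)} ≃ {i : Fin M // i ∉ pivot G ε})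

/-- the key diagonalization identity -/
lemma mulVec_qfam (hrN : a + r2 ≤ N) (j : Fin M) :
    (stackedIncidence G ε).mulVec (qfam G ε α β φ j) =
      (if (j : ℕ) < a then (1 : ℤ) else if (j : ℕ) < a + r2 then 2 else 0) •
        (if h : (j : ℕ) < N then pfam G α β ψ ⟨j, h⟩ else 0) := by
  by_cases h1 : (j : ℕ) < a
  · have hN' : (j : ℕ) < N := by omega
    rw [if_pos h1, dif_pos hN', one_smul]
    show (stackedIncidence G ε).mulVec (qfam G ε α β φ j) = pfam G α β ψ ⟨j, hN'⟩
    rw [qfam, dif_pos h1, pfam, dif_pos h1]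
    exact colB_tree G ε _
  · by_cases h2 : (j : ℕ) < a + r2
    · have hN' : (j : ℕ) < N := by omega
      rw [if_neg h1, if_pos h2, dif_pos hN']
      rw [qfam, dif_neg h1, dif_pos h2, pfam, dif_neg h1, dif_pos h2]
      rw [colB_spec, smul_smul]
    · rw [if_neg h1, if_neg h2, zero_smul]
      rw [qfam, dif_neg h1, dif_neg h2]
      rw [Matrix.mulVec_sub, sigmaQ_spec, sub_self]

lemma single_inr (v : V) :
    (Pi.single (Sum.inr v : V ⊕ V) 1 : (V ⊕ V) → ℤ) =
      Sum.elim (0 : V → ℤ) (Pi.single v (1 : ℤ)) := by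
  funext i
  cases i with
  | inl x => simp [Pi.single_apply]
  | inr x => simp [Pi.single_apply]

lemma single_inl (v : V) :
    (Pi.single (Sum.inl v : V ⊕ V) 1 : (V ⊕ V) → ℤ) =
      vec2 (Pi.single v 1) + Sum.elim (0 : V → ℤ) (Pi.single v (1 : ℤ)) := by
  funext i
  cases i with
  | inl x => simp [Pi.single_apply, vec2]
  | inr x => simp [Pi.single_apply, vec2]

lemma span_pfam (hrN : a + r2 ≤ N) :
    span ℤ (Set.range (pfam G α β ψ)) = ⊤ := by
  set S := span ℤ (Set.range (pfam G α β ψ)) with hS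
  have hbot : ∀ v : V, Sum.elim (0 : V → ℤ) (Pi.single v (1 : ℤ)) ∈ S := by
    intro v
    have := subset_span (R := ℤ) (Set.mem_range_self (f := pfam G α β ψ) (ψ.symm (Sum.inr v)).1)
    convert this using 2
    rw [pfam]
    have h3 : ¬ ((ψ.symm (Sum.inr v)).1 : ℕ) < a := by
      have := (ψ.symm (Sum.inr v)).2; omega
    have h4 : ¬ ((ψ.symm (Sum.inr v)).1 : ℕ) < a + r2 := by
      have := (ψ.symm (Sum.inr v)).2; omega
    rw [dif_neg h3, dif_neg h4]
    have : (⟨(ψ.symm (Sum.inr v)).1, by omega⟩ : {j : Fin N // a + r2 ≤ (j : ℕ)}) =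
        ψ.symm (Sum.inr v) := Subtype.ext rfl
    rw [this, Equiv.apply_symm_apply]
    rfl
  have hroots : ∀ v : V, v = rt G v → vec2 (Pi.single v 1) ∈ S := by
    intro v hv
    have hout : rootC G (G.connectedComponentMk v) = v := by
      show (G.connectedComponentMk v).out = v
      conv_rhs => rw [hv]
      rfl
    by_cases hodd : OddC G (G.connectedComponentMk v)
    · set C : {C : G.ConnectedComponent // OddC G C} := ⟨_, hodd⟩
      set k : Fin r2 := β.symm C
      have hk : (a + (k : ℕ)) < N := by have := k.2; omega
      have hmem := subset_span (R := ℤ) (Set.mem_range_self (f := pfam G α β ψ) ⟨a + (k : ℕ), hk⟩)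
      rw [pfam] at hmem
      have h3 : ¬ (a + (k : ℕ) < a) := by omega
      have h4 : a + (k : ℕ) < a + r2 := by have := k.2; omega
      rw [dif_neg h3, dif_pos h4] at hmem
      have hidx : (⟨a + (k : ℕ) - a, by omega⟩ : Fin r2) = k := by
        apply Fin.ext; simp
      rw [hidx, Equiv.apply_symm_apply] at hmem
      have := smul_mem S (sgn G (oc1 G C)) hmem
      rw [smul_smul, sgn_mul_self, one_smul] at this
      show vec2 (Pi.single v 1) ∈ S
      rwa [hout] at this
    · set C : {C : G.ConnectedComponent // ¬ OddC G C} := ⟨_, hodd⟩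
      have hmem := subset_span (R := ℤ) (Set.mem_range_self (f := pfam G α β ψ) (ψ.symm (Sum.inl C)).1)
      rw [pfam] at hmem
      have h3 : ¬ ((ψ.symm (Sum.inl C)).1 : ℕ) < a := by
        have := (ψ.symm (Sum.inl C)).2; omega
      have h4 : ¬ ((ψ.symm (Sum.inl C)).1 : ℕ) < a + r2 := by
        have := (ψ.symm (Sum.inl C)).2; omega
      rw [dif_neg h3, dif_neg h4] at hmem
      have heq : (⟨(ψ.symm (Sum.inl C)).1, by omega⟩ : {j : Fin N // a + r2 ≤ (j : ℕ)}) =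
          ψ.symm (Sum.inl C) := Subtype.ext rfl
      rw [heq, Equiv.apply_symm_apply] at hmem
      have hC : (C : G.ConnectedComponent) = G.connectedComponentMk v := rfl
      simpa [hC, hout] using hmem
  have hvec2 : ∀ v : V, vec2 (Pi.single v 1) ∈ S := by
    suffices h : ∀ (n : ℕ) (v : V), dep G v = n → vec2 (Pi.single v 1) ∈ S from
      fun v => h (dep G v) v rfl
    intro n
    induction n using Nat.strong_induction_on with
    | _ n ih =>
      intro v hv
      by_cases hroot : v = rt G v
      · exact hroots v hroot
      · set k : Fin a := α.symm ⟨v, hroot⟩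
        have hk : (k : ℕ) < N := by have := k.2; omega
        have hmem := subset_span (R := ℤ) (Set.mem_range_self (f := pfam G α β ψ) ⟨(k : ℕ), hk⟩)
        rw [pfam] at hmem
        have h3 : ((⟨(k : ℕ), hk⟩ : Fin N) : ℕ) < a := k.2
        rw [dif_pos h3] at hmem
        have hidx : (⟨((⟨(k : ℕ), hk⟩ : Fin N) : ℕ), h3⟩ : Fin a) = k := by
          apply Fin.ext; rfl
        rw [hidx, Equiv.apply_symm_apply] at hmem
        rw [vec2_add] at hmem
        have hpar : vec2 (Pi.single (par G v) 1) ∈ S := by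
          apply ih (dep G (par G v)) _ (par G v) rfl
          have := dep_par G hroot
          omega
        have := sub_mem hmem hpar
        simpa using this
  rw [eq_top_iff, ← (Pi.basisFun ℤ (V ⊕ V)).span_eq, span_le]
  rintro x ⟨i, rfl⟩
  rw [Pi.basisFun_apply]
  cases i with
  | inl v =>
    rw [single_inl]
    exact add_mem (hvec2 v) (hbot v)
  | inr v =>
    rw [single_inr]
    exact hbot v

lemma span_qfam (hrM : a + r2 ≤ M) :
    span ℤ (Set.range (qfam G ε α β φ)) = ⊤ := by
  set S := span ℤ (Set.range (qfam G ε α β φ)) with hS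
  have htree : ∀ v : {v : V // v ≠ rt G v}, treeQ G ε v ∈ S := by
    intro v
    set k : Fin a := α.symm v
    have hk : (k : ℕ) < M := by have := k.2; omega
    have hmem := subset_span (R := ℤ) (Set.mem_range_self (f := qfam G ε α β φ) ⟨(k : ℕ), hk⟩)
    rw [qfam] at hmem
    have h3 : ((⟨(k : ℕ), hk⟩ : Fin M) : ℕ) < a := k.2
    rw [dif_pos h3] at hmem
    have hidx : (⟨((⟨(k : ℕ), hk⟩ : Fin M) : ℕ), h3⟩ : Fin a) = k := by
      apply Fin.ext; rfl
    rwa [hidx, Equiv.apply_symm_apply] at hmem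
  have hQT : QT G ε ≤ S := by
    rw [QT, span_le]
    rintro x ⟨v, rfl⟩
    exact htree v
  have hspec : ∀ C : {C : G.ConnectedComponent // OddC G C}, specQ G ε C ∈ S := by
    intro C
    set k : Fin r2 := β.symm C
    have hk : a + (k : ℕ) < M := by have := k.2; omega
    have hmem := subset_span (R := ℤ) (Set.mem_range_self (f := qfam G ε α β φ) ⟨a + (k : ℕ), hk⟩)
    rw [qfam] at hmem
    have h3 : ¬ (a + (k : ℕ) < a) := by omega
    have h4 : a + (k : ℕ) < a + r2 := by have := k.2; omega
    rw [dif_neg h3, dif_pos h4] at hmem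
    have hidx : (⟨a + (k : ℕ) - a, by omega⟩ : Fin r2) = k := by
      apply Fin.ext; simp
    rwa [hidx, Equiv.apply_symm_apply] at hmem
  have hQTS : QTS G ε ≤ S := by
    rw [QTS, sup_le_iff]
    refine ⟨hQT, ?_⟩
    rw [span_le]
    rintro x ⟨C, rfl⟩
    exact hspec C
  rw [eq_top_iff, ← (Pi.basisFun ℤ (Fin M)).span_eq, span_le]
  rintro x ⟨i, rfl⟩
  rw [Pi.basisFun_apply]
  by_cases hpiv : i ∈ pivot G ε
  · rw [pivot, Finset.mem_union] at hpiv
    rcases hpiv with hp | hp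
    · simp only [Finset.mem_image, Finset.mem_univ, true_and] at hp
      obtain ⟨v, hv⟩ := hp
      have : (Pi.single i 1 : Fin M → ℤ) = treeQ G ε v := by rw [treeQ, hv]
      rw [this]
      exact htree v
    · simp only [Finset.mem_image, Finset.mem_univ, true_and] at hp
      obtain ⟨C, hC⟩ := hp
      have : (Pi.single i 1 : Fin M → ℤ) =
          specQ G ε C + yv G ε (oc1 G C) + yv G ε (oc2 G C) := by
        rw [specQ, hC]; abel
      rw [this]
      exact add_mem (add_mem (hspec C) (hQT (yv_mem G ε _))) (hQT (yv_mem G ε _))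
  · set j := φ.symm ⟨i, hpiv⟩
    have hmem := subset_span (R := ℤ) (Set.mem_range_self (f := qfam G ε α β φ) j.1)
    rw [qfam] at hmem
    have h3 : ¬ ((j.1 : Fin M) : ℕ) < a := by have := j.2; omega
    have h4 : ¬ ((j.1 : Fin M) : ℕ) < a + r2 := by have := j.2; omega
    rw [dif_neg h3, dif_neg h4] at hmem
    have heq : (⟨j.1, by omega⟩ : {j : Fin M // a + r2 ≤ (j : ℕ)}) = j := Subtype.ext rfl
    rw [heq] at hmem
    have : φ j = ⟨i, hpiv⟩ := Equiv.apply_symm_apply φ _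
    rw [this] at hmem
    have := add_mem hmem (hQTS (sigmaQ_mem G ε i))
    simpa using this

end SNFaux

namespace SNFaux

lemma isUnit_det_of_span {n : ℕ} (pf : Fin n → (Fin n → ℤ))
    (h : span ℤ (Set.range pf) = ⊤) :
    IsUnit (Matrix.of (fun i j => pf j i) : Matrix (Fin n) (Fin n) ℤ).det := by
  set A : Matrix (Fin n) (Fin n) ℤ := Matrix.of (fun i j => pf j i) with hA
  have hrange : LinearMap.range A.mulVecLin = ⊤ := by
    rw [Matrix.range_mulVecLin]
    have hT : Set.range A.col = Set.range pf := rfl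
    rw [hT, h]
  have hsurj : Function.Surjective A.mulVecLin := LinearMap.range_eq_top.mp hrange
  have hinj : Function.Injective A.mulVecLin :=
    OrzechProperty.injective_of_surjective_endomorphism A.mulVecLin hsurj
  set e := LinearEquiv.ofBijective A.mulVecLin ⟨hinj, hsurj⟩ with he
  set Bm : Matrix (Fin n) (Fin n) ℤ :=
    LinearMap.toMatrix' (e.symm : (Fin n → ℤ) →ₗ[ℤ] (Fin n → ℤ)) with hB
  have hAB : A * Bm = 1 := by
    have h1 : A = LinearMap.toMatrix' A.mulVecLin := by
      rw [← Matrix.toLin'_apply', LinearMap.toMatrix'_toLin']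
    rw [h1, hB, ← LinearMap.toMatrix'_comp, ← LinearMap.toMatrix'_id (R := ℤ) (n := Fin n)]
    congr 1
    refine LinearMap.ext fun x => ?_
    show A.mulVecLin (e.symm x) = x
    have : A.mulVecLin (e.symm x) = e (e.symm x) := rfl
    rw [this, LinearEquiv.apply_symm_apply]
  exact Matrix.isUnit_det_of_right_inverse hAB

end SNFaux

namespace SNFaux

lemma card_fin_ge (L k : ℕ) (hk : k ≤ L) :
    Fintype.card {j : Fin L // k ≤ (j : ℕ)} = L - k := by
  have e : {j : Fin L // k ≤ (j : ℕ)} ≃ Fin (L - k) :=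
    { toFun := fun j => ⟨(j.1 : ℕ) - k, by have h1 := j.1.isLt; have h2 := j.2; omega⟩
      invFun := fun i => ⟨⟨k + (i : ℕ), by have := i.isLt; omega⟩, by simp⟩
      left_inv := fun j => by
        apply Subtype.ext; apply Fin.ext; have := j.2; simp; omega
      right_inv := fun i => by apply Fin.ext; simp }
  rw [Fintype.card_congr e, Fintype.card_fin]

end SNFaux

theorem smithNormalForm_stackedIncidence' (G : SimpleGraph V)
    {N M : ℕ} (hN : N = 2 * Fintype.card V) (ρ : (V ⊕ V) ≃ Fin N)
    (ε : Fin M ≃ G.edgeSet) :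
    ∃ (U : Matrix (Fin N) (Fin N) ℤ) (W : Matrix (Fin M) (Fin M) ℤ),
      IsUnit U.det ∧ IsUnit W.det ∧
      ∀ i j, (U * (Matrix.reindex ρ (Equiv.refl (Fin M))
            (stackedIncidence G ε)) * W) i j =
        if (i : ℕ) = (j : ℕ) ∧ (j : ℕ) < Fintype.card V - (Nat.card G.ConnectedComponent) then 1
        else if (i : ℕ) = (j : ℕ) ∧
            (j : ℕ) < Fintype.card V - (Nat.card G.ConnectedComponent) +
              (Nat.card {C : G.ConnectedComponent //
                ∃ v, G.connectedComponentMk v = C ∧ ∃ w : G.Walk v v, Odd w.length}) then 2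
        else 0 := by
  classical
  set n := Fintype.card V with hn
  set c := Fintype.card G.ConnectedComponent with hc
  set a := Fintype.card {v : V // v ≠ SNFaux.rt G v} with ha
  set r2 := Fintype.card {C : G.ConnectedComponent // SNFaux.OddC G C} with hr2def
  have hac : a = n - c := SNFaux.card_nonroots G
  have hcn : c ≤ n := SNFaux.card_comp_le G
  have hr2c : r2 ≤ c := Fintype.card_subtype_le _
  have hnumComp : Nat.card G.ConnectedComponent = c := Nat.card_eq_fintype_card
  have hnumOdd : Nat.card {C : G.ConnectedComponent //
      ∃ v, G.connectedComponentMk v = C ∧ ∃ w : G.Walk v v, Odd w.length} = r2 := by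
    rw [hr2def, ← Nat.card_eq_fintype_card]
    exact Nat.card_congr (Equiv.subtypeEquivRight (fun C => Iff.rfl))
  set α := (Fintype.equivFin {v : V // v ≠ SNFaux.rt G v}).symm with hα
  set β := (Fintype.equivFin {C : G.ConnectedComponent // SNFaux.OddC G C}).symm with hβ
  have hpiv := SNFaux.card_pivot G ε
  have hrM : a + r2 ≤ M := by
    rw [ha, hr2def, ← hpiv]
    have := Finset.card_le_univ (SNFaux.pivot G ε)
    simpa using this
  have hrN : a + r2 ≤ N := by omega
  have hφcard : Fintype.card {j : Fin M // a + r2 ≤ (j : ℕ)} =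
      Fintype.card {i : Fin M // i ∉ SNFaux.pivot G ε} := by
    rw [SNFaux.card_fin_ge M (a + r2) hrM]
    have h2 := Fintype.card_subtype_compl (fun i : Fin M => i ∈ SNFaux.pivot G ε)
    rw [h2, Fintype.card_fin]
    congr 1
    rw [← hpiv]
    exact (Fintype.card_coe _).symm
  set φ := Fintype.equivOfCardEq hφcard with hφ
  have hψcard : Fintype.card {j : Fin N // a + r2 ≤ (j : ℕ)} =
      Fintype.card ({C : G.ConnectedComponent // ¬ SNFaux.OddC G C} ⊕ V) := by
    rw [SNFaux.card_fin_ge N (a + r2) hrN, Fintype.card_sum]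
    have h2 := Fintype.card_subtype_compl (fun C : G.ConnectedComponent => SNFaux.OddC G C)
    rw [h2]
    omega
  set ψ := Fintype.equivOfCardEq hψcard with hψ
  set p := SNFaux.pfam G α β ψ with hp
  set q := SNFaux.qfam G ε α β φ with hq
  set P' : Matrix (Fin N) (Fin N) ℤ := Matrix.of (fun i j => p j (ρ.symm i)) with hP'
  set W : Matrix (Fin M) (Fin M) ℤ := Matrix.of (fun i j => q j i) with hW
  have hdetW : IsUnit W.det :=
    SNFaux.isUnit_det_of_span q (SNFaux.span_qfam G ε α β φ hrM)
  have hdetP : IsUnit P'.det := by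
    have hsp : span ℤ (Set.range (fun j => (p j) ∘ ρ.symm)) = ⊤ := by
      have himg : Set.range (fun j => (p j) ∘ ρ.symm) =
          (LinearEquiv.funCongrLeft ℤ ℤ ρ.symm) '' (Set.range p) := by
        rw [← Set.range_comp]
        rfl
      rw [himg, show ⇑(LinearEquiv.funCongrLeft ℤ ℤ ρ.symm) =
          ⇑(LinearEquiv.funCongrLeft ℤ ℤ ρ.symm).toLinearMap from rfl, ← Submodule.map_span, SNFaux.span_pfam G α β ψ hrN, Submodule.map_top]
      simp
    exact SNFaux.isUnit_det_of_span _ hsp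
  set Dm : Matrix (Fin N) (Fin M) ℤ := Matrix.of (fun i j =>
    if (i : ℕ) = (j : ℕ) ∧ (j : ℕ) < a then 1
    else if (i : ℕ) = (j : ℕ) ∧ (j : ℕ) < a + r2 then 2 else 0) with hDm
  have hDm' : ∀ (k : Fin N) (j : Fin M), Dm k j =
      if (k : ℕ) = (j : ℕ) then
        (if (j : ℕ) < a then (1 : ℤ) else if (j : ℕ) < a + r2 then 2 else 0) else 0 := by
    intro k j
    by_cases h : (k : ℕ) = (j : ℕ) <;> simp [hDm, h]
  have key : (Matrix.reindex ρ (Equiv.refl (Fin M)) (stackedIncidence G ε)) * W = P' * Dm := by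
    ext i j
    have lhs : ((Matrix.reindex ρ (Equiv.refl (Fin M)) (stackedIncidence G ε)) * W) i j
        = (stackedIncidence G ε).mulVec (q j) (ρ.symm i) := by
      rw [Matrix.mul_apply, Matrix.mulVec, dotProduct]
      apply Finset.sum_congr rfl
      intro k _
      rw [Matrix.reindex_apply, Matrix.submatrix_apply]
      rfl
    rw [lhs, SNFaux.mulVec_qfam G ε α β ψ φ hrN j]
    rw [Matrix.mul_apply]
    by_cases hjN : (j : ℕ) < N
    · have hiff : ∀ k : Fin N, ((k : ℕ) = (j : ℕ)) ↔ (k = ⟨(j : ℕ), hjN⟩) := by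
        intro k
        constructor
        · intro h; exact Fin.ext h
        · intro h; rw [h]
      rw [Finset.sum_congr rfl (fun k _ => by
        rw [hDm' k j, if_congr (hiff k) rfl rfl, mul_ite, mul_zero])]
      rw [Finset.sum_ite_eq' Finset.univ (⟨(j : ℕ), hjN⟩ : Fin N)]
      rw [if_pos (Finset.mem_univ _)]
      rw [dif_pos hjN]
      simp only [Pi.smul_apply, smul_eq_mul, hP', Matrix.of_apply]
      ring
    · have hz : ∀ k : Fin N, P' i k * Dm k j = 0 := by
        intro k
        rw [hDm' k j, if_neg (by have := k.isLt; omega), mul_zero]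
      rw [Finset.sum_congr rfl (fun k _ => hz k), Finset.sum_const_zero]
      rw [dif_neg hjN]
      simp
  refine ⟨P'⁻¹, W, Matrix.isUnit_nonsing_inv_det _ hdetP, hdetW, ?_⟩
  intro i j
  rw [Matrix.mul_assoc, key, ← Matrix.mul_assoc, Matrix.nonsing_inv_mul _ hdetP,
    Matrix.one_mul]
  rw [hnumComp, hnumOdd]
  have e1 : n - c = a := by omega
  rw [e1]
  rfl


/-- Apart from zero rows, the Smith normal form of `(A_G; -A_G)` is diagonal with
`|V| - c(G)` entries equal to `1` followed by `c₁(G)` entries equal to `2`. -/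
theorem smithNormalForm_stackedIncidence (G : SimpleGraph V)
    {N M : ℕ} (hN : N = 2 * Fintype.card V) (ρ : (V ⊕ V) ≃ Fin N)
    (ε : Fin M ≃ G.edgeSet) :
    ∃ (U : Matrix (Fin N) (Fin N) ℤ) (W : Matrix (Fin M) (Fin M) ℤ),
      IsUnit U.det ∧ IsUnit W.det ∧
      ∀ i j, (U * (Matrix.reindex ρ (Equiv.refl (Fin M))
            (stackedIncidence G ε)) * W) i j =
        if (i : ℕ) = (j : ℕ) ∧ (j : ℕ) < Fintype.card V - numComp G then 1
        else if (i : ℕ) = (j : ℕ) ∧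
            (j : ℕ) < Fintype.card V - numComp G + numOddComp G then 2
        else 0 := by
  exact smithNormalForm_stackedIncidence' G hN ρ ε
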